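/- Let λ, μ : I → ℝ be positive differentiable functions on an interval I ⊆ ℝ, and let s ∈ ℝ. Define conditions (A): λμ is constant on I; (B): (λ²μ⁴)′ − s λ⁴μ² = 0 on I; (C): (μ²/λ²)′ − 2s = 0 on I. Then any two of the conditions (A), (B), (C) imply the third. -/

import Mathlib

open Set

/-- Lemma 2.2: for positive differentiable λ, μ on an interval,
    any two of the conditions (λμ constant), ((λ²μ⁴)′ = sλ⁴μ²), ((μ²/λ²)′ = 2s)
    imply the third. -/
theorem two_of_three_conditions (a b s : ℝ) (l m l' m' : ℝ → ℝ)
    (hl : ∀ r ∈ Ioo a b, 0 < l r) (hm : ∀ r ∈ Ioo a b, 0 < m r)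
    (hld : ∀ r ∈ Ioo a b, HasDerivAt l (l' r) r)
    (hmd : ∀ r ∈ Ioo a b, HasDerivAt m (m' r) r) :
    ((∃ c, ∀ r ∈ Ioo a b, l r * m r = c) →
      (∀ r ∈ Ioo a b, HasDerivAt (fun x => l x ^ 2 * m x ^ 4) (s * l r ^ 4 * m r ^ 2) r) →
      (∀ r ∈ Ioo a b, HasDerivAt (fun x => m x ^ 2 / l x ^ 2) (2 * s) r)) ∧
    ((∃ c, ∀ r ∈ Ioo a b, l r * m r = c) →
      (∀ r ∈ Ioo a b, HasDerivAt (fun x => m x ^ 2 / l x ^ 2) (2 * s) r) →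
      (∀ r ∈ Ioo a b, HasDerivAt (fun x => l x ^ 2 * m x ^ 4) (s * l r ^ 4 * m r ^ 2) r)) ∧
    ((∀ r ∈ Ioo a b, HasDerivAt (fun x => l x ^ 2 * m x ^ 4) (s * l r ^ 4 * m r ^ 2) r) →
      (∀ r ∈ Ioo a b, HasDerivAt (fun x => m x ^ 2 / l x ^ 2) (2 * s) r) →
      (∃ c, ∀ r ∈ Ioo a b, l r * m r = c)) := by
  -- computed derivative of l²m⁴
  have hBV : ∀ r ∈ Ioo a b, HasDerivAt (fun x => l x ^ 2 * m x ^ 4)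
      (2 * l r * l' r * m r ^ 4 + l r ^ 2 * (4 * m r ^ 3 * m' r)) r := by
    intro r hr
    have := ((hld r hr).fun_pow 2).fun_mul ((hmd r hr).fun_pow 4)
    refine this.congr_deriv ?_
    norm_num
  -- computed derivative of m²/l²
  have hCV : ∀ r ∈ Ioo a b, HasDerivAt (fun x => m x ^ 2 / l x ^ 2)
      ((2 * m r * m' r * l r ^ 2 - m r ^ 2 * (2 * l r * l' r)) / (l r ^ 2) ^ 2) r := by
    intro r hr
    have hlp := hl r hr
    have := ((hmd r hr).fun_pow 2).fun_div ((hld r hr).fun_pow 2) (by positivity : (l r ^ 2 : ℝ) ≠ 0)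
    refine this.congr_deriv ?_
    norm_num
  -- computed derivative of l*m
  have hPV : ∀ r ∈ Ioo a b, HasDerivAt (fun x => l x * m x)
      (l' r * m r + l r * m' r) r := fun r hr => (hld r hr).mul (hmd r hr)
  -- from lm constant, get l'm + lm' = 0 on Ioo
  have hconst : ∀ c : ℝ, (∀ r ∈ Ioo a b, l r * m r = c) →
      ∀ r ∈ Ioo a b, l' r * m r + l r * m' r = 0 := by
    intro c hc r hr
    have h0 : HasDerivAt (fun x => l x * m x) 0 r := by
      have heq : (fun x => l x * m x) =ᶠ[nhds r] fun _ => c := by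
        filter_upwards [isOpen_Ioo.mem_nhds hr] with x hx using hc x hx
      exact (hasDerivAt_const r c).congr_of_eventuallyEq heq
    exact (hPV r hr).unique h0
  refine ⟨?_, ?_, ?_⟩
  · rintro ⟨c, hc⟩ hB r hr
    have hu := hconst c hc r hr
    have hE1 := (hB r hr).unique (hBV r hr)
    have hlne := (hl r hr).ne'
    have hmne := (hm r hr).ne'
    -- derive m' relation: 2 l² m³ m' = s l⁴ m²
    have hm3 : 2 * l r ^ 2 * m r ^ 3 * m' r = s * l r ^ 4 * m r ^ 2 := by
      linear_combination -hE1 - 2 * l r * m r ^ 3 * hu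
    have hm1 : 2 * l r ^ 2 * m r * m' r = s * l r ^ 4 := by
      have h2 : (2 * l r ^ 2 * m r * m' r) * m r ^ 2 = (s * l r ^ 4) * m r ^ 2 := by
        linear_combination hm3
      exact mul_right_cancel₀ (pow_ne_zero 2 hmne) h2
    have : (2 * m r * m' r * l r ^ 2 - m r ^ 2 * (2 * l r * l' r)) / (l r ^ 2) ^ 2
        = 2 * s := by
      rw [div_eq_iff (by positivity)]
      linear_combination 2 * hm1 - 2 * l r * m r * hu
    rw [← this]
    exact hCV r hr
  · rintro ⟨c, hc⟩ hC r hr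
    have hu := hconst c hc r hr
    have hlne := (hl r hr).ne'
    have hC0 := (hC r hr).unique (hCV r hr)
    rw [eq_comm, div_eq_iff (by positivity : ((l r ^ 2 : ℝ)) ^ 2 ≠ 0)] at hC0
    have : s * l r ^ 4 * m r ^ 2
        = 2 * l r * l' r * m r ^ 4 + l r ^ 2 * (4 * m r ^ 3 * m' r) := by
      linear_combination -(m r ^ 2 / 2) * hC0 - 3 * l r * m r ^ 3 * hu
    rw [this]
    exact hBV r hr
  · intro hB hC
    by_cases hab : a < b
    · have hne : ((a + b) / 2) ∈ Ioo a b := ⟨by linarith, by linarith⟩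
      refine ⟨l ((a+b)/2) * m ((a+b)/2), fun r hr => ?_⟩
      -- derivative of lm is zero on Ioo
      have hzero : ∀ x ∈ Ioo a b, l' x * m x + l x * m' x = 0 := by
        intro x hx
        have hE1 := (hB x hx).unique (hBV x hx)
        have hC0 := (hC x hx).unique (hCV x hx)
        have hlne := (hl x hx).ne'
        have hmne := (hm x hx).ne'
        rw [eq_comm, div_eq_iff (by positivity : ((l x ^ 2 : ℝ)) ^ 2 ≠ 0)] at hC0
        have h3 : 3 * l x * m x ^ 3 * (l' x * m x + l x * m' x) = 0 := by
          linear_combination -hE1 - (m x ^ 2 / 2) * hC0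
        have h3' : (3 : ℝ) * l x * m x ^ 3 ≠ 0 := by positivity
        exact (mul_eq_zero.mp h3).resolve_left h3'
      have hder : ∀ x ∈ Ioo a b, HasDerivWithinAt (fun y => l y * m y) 0 (Ioo a b) x := by
        intro x hx
        have := hPV x hx
        rw [hzero x hx] at this
        exact this.hasDerivWithinAt
      have := (convex_Ioo a b).norm_image_sub_le_of_norm_hasDerivWithin_le (C := 0)
        hder (fun x _ => by simp) hne hr
      simp only [norm_zero, zero_mul, norm_le_zero_iff, sub_eq_zero] at this
      exact this
    · exact ⟨0, fun r hr => absurd hr (by simp [Ioo_eq_empty hab])⟩
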